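/- Let K be a field of characteristic zero, c ∈ K nonzero, a ∈ K, β = a/c, φ the K-algebra endomorphism of K[x] mapping x to x + c, δ = I - φ, and I the ideal (x^2 - ax)K[x]. For each n ≥ 0 define D_n(t) ∈ ℚ[t] by D_n(t) = (1/(n+1)) Σ_{i=0}^n C(n+1, i) B_i t^{n-i}, where B_i are the Bernoulli numbers (B_1 = -1/2). Then for all n ≥ 0 one has x^n - D_n(β)·c^n ∈ δ(I), where D_n(β) ∈ K is the evaluation of D_n at β via the canonical map ℚ → K. -/

import Mathlib

open Polynomial

private lemma bern_comp (n : ℕ) :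
    (Polynomial.bernoulli (n+1)).comp (X + 1) - Polynomial.bernoulli (n+1)
      = C ((n : ℚ) + 1) * X ^ n := by
  apply Polynomial.funext
  intro x
  simp [Polynomial.bernoulli_eval_one_add, add_comm x 1]

private lemma bern_eval {K : Type*} [Field K] [CharZero K] (n : ℕ) (t : K) :
    ((Polynomial.bernoulli (n+1)).map (algebraMap ℚ K)).eval t
      = ∑ i ∈ Finset.range (n+2),
          ((n+1).choose i : K) * algebraMap ℚ K (bernoulli i) * t ^ (n+1-i) := by
  simp [Polynomial.bernoulli, Polynomial.eval_finset_sum, mul_comm, mul_assoc, mul_left_comm]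

theorem powers_mod_delta_I {K : Type*} [Field K] [CharZero K] (c a : K) (hc : c ≠ 0)
    (n : ℕ) :
    (X : Polynomial K) ^ n -
        C ((((n : K) + 1)⁻¹ *
            ∑ i ∈ Finset.range (n + 1),
              ((n + 1).choose i : K) * algebraMap ℚ K (bernoulli i) * (a / c) ^ (n - i)) *
          c ^ n) ∈
      Submodule.map ((LinearMap.id : Polynomial K →ₗ[K] Polynomial K) -
          (aeval (X + C c)).toLinearMap)
        (Submodule.restrictScalars K (Ideal.span {X ^ 2 - C a * X})) := by
  set β : K := a / c with hβ
  set d : K := ((n : K) + 1)⁻¹ *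
      ∑ i ∈ Finset.range (n + 1),
        ((n + 1).choose i : K) * algebraMap ℚ K (bernoulli i) * β ^ (n - i) with hd
  have hn1 : ((n : K) + 1) ≠ 0 := by
    have := (Nat.cast_ne_zero (R := K)).2 (Nat.succ_ne_zero n)
    push_cast at this
    exact this
  set Pk : Polynomial K := (Polynomial.bernoulli (n+1)).map (algebraMap ℚ K) with hPkdef
  have hPk : Pk.comp (X + 1) - Pk = C ((n : K) + 1) * X ^ n := by
    have := congrArg (Polynomial.map (algebraMap ℚ K)) (bern_comp n)
    simpa [Polynomial.map_comp] using this
  have hePk : ∀ t : K, Pk.eval t = ∑ i ∈ Finset.range (n+2),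
      ((n+1).choose i : K) * algebraMap ℚ K (bernoulli i) * t ^ (n+1-i) := by
    intro t; rw [hPkdef]; exact bern_eval n t
  set G : Polynomial K := C d * (X - C β) + C (((n : K) + 1)⁻¹) * (C (Pk.eval β) - Pk)
    with hG
  clear_value β d Pk G
  -- Pk.eval 0
  have hz : Pk.eval 0 = algebraMap ℚ K (_root_.bernoulli (n+1)) := by
    rw [hePk 0, Finset.sum_range_succ]
    rw [Finset.sum_eq_zero (fun i hi => by
      rw [Finset.mem_range] at hi
      have : n + 1 - i ≠ 0 := by omega
      simp [zero_pow this])]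
    norm_num
  have hβs : Pk.eval β = (∑ i ∈ Finset.range (n+1),
      (((n + 1).choose i : K) * algebraMap ℚ K (_root_.bernoulli i) * β ^ (n - i)) * β)
        + algebraMap ℚ K (_root_.bernoulli (n+1)) := by
    rw [hePk β, Finset.sum_range_succ]
    congr 1
    · exact Finset.sum_congr rfl (fun i hi => by
        rw [Finset.mem_range] at hi
        rw [show n + 1 - i = (n - i) + 1 from by omega, pow_succ]
        ring)
    · simp
  have hsum : ((n : K) + 1) * (d * β) = Pk.eval β - Pk.eval 0 := by
    rw [hβs, hz, ← Finset.sum_mul, hd]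
    field_simp
    ring
  have hdβ : d * β = ((n : K) + 1)⁻¹ * (Pk.eval β - Pk.eval 0) := by
    rw [← hsum, ← mul_assoc, inv_mul_cancel₀ hn1, one_mul]
  have hG0 : G.eval 0 = 0 := by
    simp only [hG, eval_add, eval_mul, eval_sub, eval_C, eval_X]
    linear_combination (-1 : K) * hdβ
  have hGβ : G.eval β = 0 := by
    simp [hG]
  have hδG : G - G.comp (X + 1) = X ^ n - C d := by
    rw [hG]
    simp only [add_comp, mul_comp, sub_comp, C_comp, X_comp]
    have hc2 : Pk.comp (X+1) = Pk + C ((n : K) + 1) * X ^ n := by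
      rw [← hPk]; ring
    rw [hc2]
    rw [show C (((n:K)+1)⁻¹) * (C (Pk.eval β) - (Pk + C ((n:K)+1) * X ^ n))
        = C (((n:K)+1)⁻¹) * (C (Pk.eval β) - Pk) - C (((n:K)+1)⁻¹) * C ((n:K)+1) * X^n
        by ring]
    rw [← C_mul, inv_mul_cancel₀ hn1, C_1]
    ring
  -- divisibility
  have hdvd : (X ^ 2 - C β * X) ∣ G := by
    rcases eq_or_ne β 0 with h0 | h0
    · rw [h0]
      simp only [map_zero, zero_mul, sub_zero]
      rw [Polynomial.X_pow_dvd_iff]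
      intro m hm
      interval_cases m
      · rw [Polynomial.coeff_zero_eq_eval_zero]
        exact hG0
      · have hcoeff : Pk.coeff 1 = algebraMap ℚ K ((Polynomial.bernoulli (n+1)).coeff 1) := by
          rw [hPkdef]; exact Polynomial.coeff_map _ _
        have hb1 : (Polynomial.bernoulli (n+1)).coeff 1
            = _root_.bernoulli n * ((n+1 : ℚ)) := by
          rw [Polynomial.bernoulli, Polynomial.finset_sum_coeff]
          rw [Finset.sum_eq_single n]
          · rw [Polynomial.coeff_monomial, if_pos (by omega : n + 1 - n = 1),
              Nat.choose_succ_self_right]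
            push_cast; ring
          · intro i hi hne
            rw [Polynomial.coeff_monomial]
            rw [Finset.mem_range] at hi
            have : n + 1 - i ≠ 1 := by omega
            simp [this]
          · intro h
            exact absurd (Finset.mem_range.2 (by omega)) h
        have hdval : d = algebraMap ℚ K (_root_.bernoulli n) := by
          rw [hd, h0]
          rw [Finset.sum_eq_single n]
          · have h3 : ((n+1).choose n : K) = (n : K) + 1 := by
              rw [Nat.choose_succ_self_right]; push_cast; ring
            rw [Nat.sub_self, pow_zero, mul_one, h3, ← mul_assoc, inv_mul_cancel₀ hn1, one_mul]
          · intro i hi hne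
            rw [Finset.mem_range] at hi
            have : n - i ≠ 0 := by omega
            simp [zero_pow this]
          · intro h
            exact absurd (Finset.mem_range.2 (by omega)) h
        simp only [hG, coeff_add, coeff_C_mul, coeff_sub, coeff_X_one, h0, map_zero,
          coeff_C, one_ne_zero, if_false, sub_zero]
        rw [hcoeff, hb1, hdval, map_mul]
        have h4 : algebraMap ℚ K ((n : ℚ) + 1) = (n : K) + 1 := by
          push_cast; ring
        rw [h4]
        field_simp
        ring
    · have hX : X ∣ G := by
        rw [Polynomial.X_dvd_iff, Polynomial.coeff_zero_eq_eval_zero]; exact hG0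
      have hXβ : (X - C β) ∣ G := by
        rw [Polynomial.dvd_iff_isRoot]; exact hGβ
      have hcop : IsCoprime (X : Polynomial K) (X - C β) := by
        refine ⟨C β⁻¹, -C β⁻¹, ?_⟩
        rw [show C β⁻¹ * X + -C β⁻¹ * (X - C β) = C β⁻¹ * C β by ring, ← C_mul,
          inv_mul_cancel₀ h0, C_1]
      have h5 := hcop.mul_dvd hX hXβ
      rwa [show (X : Polynomial K) * (X - C β) = X ^ 2 - C β * X by ring] at h5
  obtain ⟨q, hq⟩ := hdvd
  -- transport via x ↦ c⁻¹ x
  have haeval : ∀ p r : Polynomial K, aeval p r = r.comp p := by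
    intro p r
    rw [Polynomial.aeval_def, Polynomial.comp, Polynomial.algebraMap_eq]
  refine Submodule.mem_map.2 ⟨C (c ^ n) * G.comp (C c⁻¹ * X), ?_, ?_⟩
  · rw [Submodule.restrictScalars_mem, Ideal.mem_span_singleton']
    refine ⟨C (c ^ n) * C (c⁻¹ ^ 2) * q.comp (C c⁻¹ * X), ?_⟩
    rw [hq, Polynomial.mul_comp]
    have hspan : (X ^ 2 - C β * X).comp (C c⁻¹ * X) = C (c⁻¹ ^ 2) * (X ^ 2 - C a * X) := by
      simp only [sub_comp, pow_comp, mul_comp, C_comp, X_comp]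
      rw [hβ, div_eq_mul_inv]
      rw [show (C c⁻¹ * X) ^ 2 - C (a * c⁻¹) * (C c⁻¹ * X)
          = C c⁻¹ ^ 2 * X ^ 2 - (C (a * c⁻¹) * C c⁻¹) * X by ring]
      rw [← C_mul, ← C_pow]
      rw [show a * c⁻¹ * c⁻¹ = c⁻¹ ^ 2 * a by ring, C_mul]
      ring
    rw [hspan]
    ring
  · simp only [LinearMap.sub_apply, LinearMap.id_apply, AlgHom.toLinearMap_apply]
    rw [haeval, Polynomial.mul_comp, C_comp, Polynomial.comp_assoc]
    have hcc : (C c⁻¹ * X).comp (X + C c) = (X + 1).comp (C c⁻¹ * X) := by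
      simp only [mul_comp, C_comp, X_comp, add_comp, one_comp]
      rw [mul_add, ← C_mul, inv_mul_cancel₀ hc, C_1]
    rw [hcc, ← Polynomial.comp_assoc]
    rw [show C (c ^ n) * G.comp (C c⁻¹ * X) - C (c ^ n) * (G.comp (X + 1)).comp (C c⁻¹ * X)
        = C (c ^ n) * ((G - G.comp (X+1)).comp (C c⁻¹ * X)) by rw [sub_comp]; ring]
    rw [hδG]
    simp only [sub_comp, pow_comp, mul_comp, C_comp, X_comp]
    rw [mul_sub, mul_pow, ← mul_assoc, ← C_pow, ← C_mul]
    have h6 : c ^ n * c⁻¹ ^ n = 1 := by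
      rw [← mul_pow, mul_inv_cancel₀ hc, one_pow]
    rw [h6, C_1, one_mul, ← C_mul, mul_comm (c ^ n) d]
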